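/- arXiv:2605.04795 — 2 statements merged into one kernel-verified Lean document; each statement's English description precedes it below -/
import Mathlib

section
/- Let \u0393 be a finite graph (possibly with parallel edges and loops) with an orientation O. The following are equivalent: (1) for every cycle \u03b3 in \u0393, the number of edges that \u03b3 traverses in the direction of O equals the number of edges that \u03b3 traverses against the direction of O; (2) there exists a finite sequence of orientations O = O_0, O_1, ..., O_k = O^rev (the reversal of O) such that each O_i arises from O_{i-1} by pushing up a sink. -/
/-!
Finite multigraphs (parallel edges and loops allowed).

An edge is recorded with an (auxiliary) ordered pair of endpoints; the graph is
regarded as unoriented, and a *dart* is an edge together with a direction of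
traversal.  A *cycle* is a closed edge-path.  An *orientation* chooses a
direction for every edge.
-/

structure FinMultigraph where
  V : Type
  E : Type
  fintypeV : Fintype V
  fintypeE : Fintype E
  ends : E → V × V

namespace FinMultigraph

variable (G : FinMultigraph)

/-- A dart: an edge with a direction of traversal (`true` = from `(ends e).1` to
`(ends e).2`, `false` = the other way). -/
abbrev Dart (G : FinMultigraph) : Type := G.E × Bool

/-- Starting vertex of a dart. -/
def dartSrc (d : G.Dart) : G.V := if d.2 then (G.ends d.1).1 else (G.ends d.1).2

/-- Ending vertex of a dart. -/
def dartDst (d : G.Dart) : G.V := if d.2 then (G.ends d.1).2 else (G.ends d.1).1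

/-- `G.IsWalk u v l` : the list of darts `l` forms an edge-path from `u` to `v`. -/
def IsWalk : G.V → G.V → List G.Dart → Prop
  | u, v, [] => u = v
  | u, v, d :: l => G.dartSrc d = u ∧ IsWalk (G.dartDst d) v l

/-- A cycle: a closed edge-path (at some vertex).  Its length is the number of
edges traversed (with multiplicity). -/
def IsCycle (l : List G.Dart) : Prop := ∃ v, G.IsWalk v v l

/-- A graph is bipartite if the vertices split into two classes `L` and `Lᶜ`
such that every edge joins a vertex of `L` to a vertex of `Lᶜ`. -/
def Bipartite : Prop :=
  ∃ L : Set G.V, ∀ e : G.E, ((G.ends e).1 ∈ L ↔ (G.ends e).2 ∉ L)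

/-- An orientation of `G`: a direction for every edge. -/
abbrev Orientation (G : FinMultigraph) : Type := G.E → Bool

/-- The reversed orientation `O^rev`. -/
def reverse (O : G.Orientation) : G.Orientation := fun e => !(O e)

/-- Tail (starting vertex) of an edge under an orientation. -/
def oSrc (O : G.Orientation) (e : G.E) : G.V := G.dartSrc (e, O e)

/-- Head (ending vertex) of an edge under an orientation. -/
def oDst (O : G.Orientation) (e : G.E) : G.V := G.dartDst (e, O e)

/-- Incidence of a vertex and an edge. -/
def Incident (v : G.V) (e : G.E) : Prop := (G.ends e).1 = v ∨ (G.ends e).2 = v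

/-- A sink of an orientation: a vertex all of whose incident edges point into it
(in particular no loop is attached to it). -/
def IsSink (O : G.Orientation) (v : G.V) : Prop :=
  ∀ e, G.Incident v e → (G.oDst O e = v ∧ G.oSrc O e ≠ v)

/-- `O'` arises from `O` by pushing up a sink: `O` and `O'` differ precisely on
the edges surrounding some sink of `O`. -/
def PushUpSink (O O' : G.Orientation) : Prop :=
  ∃ v, G.IsSink O v ∧ ∀ e, (O' e ≠ O e ↔ G.Incident v e)

/-- The number of edges a walk `l` traverses in the direction of `O`. -/
def forwardCount (O : G.Orientation) (l : List G.Dart) : ℕ :=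
  (l.filter fun d => d.2 == O d.1).length

/-- The number of edges a walk `l` traverses against the direction of `O`. -/
def backwardCount (O : G.Orientation) (l : List G.Dart) : ℕ :=
  (l.filter fun d => d.2 != O d.1).length

/-- Connectedness of a multigraph: any two vertices are joined by a walk. -/
def Connected : Prop := ∀ u v : G.V, ∃ l, G.IsWalk u v l

/-- A height map for an orientation: drops by `1` along every oriented edge. -/
def IsHeightMap (O : G.Orientation) (h : G.V → ℤ) : Prop :=
  ∀ e : G.E, h (G.oDst O e) = h (G.oSrc O e) - 1

end FinMultigraph

namespace FinMultigraph

variable {G : FinMultigraph}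

open Classical

noncomputable instance instFintypeV (G : FinMultigraph) : Fintype G.V := G.fintypeV

/-- Weight of a dart: `-1` if traversed along the orientation, `+1` against. -/
def dwt (O : G.Orientation) (d : G.Dart) : ℤ := if d.2 = O d.1 then -1 else 1

/-- Weight of a walk. -/
def wt (O : G.Orientation) (l : List G.Dart) : ℤ := (l.map (dwt O)).sum

lemma wt_eq (O : G.Orientation) (l : List G.Dart) :
    wt O l = (G.backwardCount O l : ℤ) - (G.forwardCount O l : ℤ) := by
  induction l with
  | nil => simp [wt, backwardCount, forwardCount]
  | cons d t ih =>
    simp only [wt, backwardCount, forwardCount, List.map_cons, List.sum_cons,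
      List.filter_cons] at *
    by_cases h : d.2 = O d.1
    · simp [dwt, h, ih]; ring
    · have : (d.2 != O d.1) = true := by simp [h]
      simp [dwt, h, this, ih]; ring

lemma count_eq_iff_wt (O : G.Orientation) (l : List G.Dart) :
    G.forwardCount O l = G.backwardCount O l ↔ wt O l = 0 := by
  rw [wt_eq]; omega

/-- source/destination of the dart of an edge under `O`. -/
lemma dartSrc_not (e : G.E) (b : Bool) : G.dartSrc (e, !b) = G.dartDst (e, b) := by
  cases b <;> simp [dartSrc, dartDst]

lemma dartDst_not (e : G.E) (b : Bool) : G.dartDst (e, !b) = G.dartSrc (e, b) := by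
  cases b <;> simp [dartSrc, dartDst]

lemma dartSrc_mem (d : G.Dart) : G.dartSrc d = (G.ends d.1).1 ∨ G.dartSrc d = (G.ends d.1).2 := by
  rcases d with ⟨e, b⟩; cases b <;> simp [dartSrc]

lemma dartDst_mem (d : G.Dart) : G.dartDst d = (G.ends d.1).1 ∨ G.dartDst d = (G.ends d.1).2 := by
  rcases d with ⟨e, b⟩; cases b <;> simp [dartDst]

lemma not_incident_src {v : G.V} {e : G.E} (h : ¬ G.Incident v e) (b : Bool) :
    G.dartSrc (e, b) ≠ v := by
  intro hc
  rcases dartSrc_mem (G := G) (e, b) with h1 | h1 <;>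
    exact h (by simp [Incident, hc ▸ h1.symm, h1 ▸ hc])

lemma not_incident_dst {v : G.V} {e : G.E} (h : ¬ G.Incident v e) (b : Bool) :
    G.dartDst (e, b) ≠ v := by
  intro hc
  rcases dartDst_mem (G := G) (e, b) with h1 | h1 <;>
    exact h (by simp [Incident, hc ▸ h1.symm, h1 ▸ hc])

lemma isWalk_append {u v w : G.V} {l m : List G.Dart} (h1 : G.IsWalk u v l)
    (h2 : G.IsWalk v w m) : G.IsWalk u w (l ++ m) := by
  induction l generalizing u with
  | nil => simpa [IsWalk] using h1 ▸ h2
  | cons d t ih => exact ⟨h1.1, ih h1.2⟩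

/-- Reversal of a dart. -/
def rv (d : G.Dart) : G.Dart := (d.1, !d.2)

lemma isWalk_reverse {u v : G.V} {l : List G.Dart} (h : G.IsWalk u v l) :
    G.IsWalk v u (l.reverse.map rv) := by
  induction l generalizing u with
  | nil => simpa [IsWalk] using h.symm
  | cons d t ih =>
    obtain ⟨h1, h2⟩ := h
    have := isWalk_append (ih h2) (l := t.reverse.map rv) (m := [rv d])
      (show G.IsWalk (G.dartDst d) u [rv d] by
        refine ⟨?_, ?_⟩
        · simpa [rv] using dartSrc_not (G := G) d.1 d.2
        · simpa [rv, IsWalk] using (dartDst_not (G := G) d.1 d.2).trans h1)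
    simpa using this

lemma wt_reverse (O : G.Orientation) (l : List G.Dart) :
    wt O (l.reverse.map rv) = - wt O l := by
  have hdw : ∀ d : G.Dart, dwt (G := G) O (rv d) = - dwt O d := by
    intro ⟨e, b⟩
    by_cases h : b = O e <;> simp [dwt, rv, h]
  induction l with
  | nil => simp [wt]
  | cons d t ih => simp [wt, hdw] at *; omega

lemma wt_rev_orientation (O : G.Orientation) (l : List G.Dart) :
    wt (G := G) (G.reverse O) l = - wt O l := by
  have hdw : ∀ d : G.Dart, dwt (G := G) (G.reverse O) d = - dwt O d := by
    intro ⟨e, b⟩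
    by_cases h : b = O e <;> simp [dwt, reverse, h] <;>
      exact if_pos (by revert h; cases b <;> cases O e <;> simp)
  induction l with
  | nil => simp [wt]
  | cons d t ih => simp [wt, hdw] at *; omega

/-- Indicator. -/

noncomputable def chi (v x : G.V) : ℤ := if x = v then 1 else 0


lemma chi_pos {v x : G.V} (h : x = v) : chi (G := G) v x = 1 := by simp [chi, h]


lemma chi_neg {v x : G.V} (h : x ≠ v) : chi (G := G) v x = 0 := by simp [chi, h]

lemma dwt_pos {O : G.Orientation} {d : G.Dart} (h : d.2 = O d.1) : dwt (G := G) O d = -1 := by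
  simp [dwt, h]

lemma dwt_neg {O : G.Orientation} {d : G.Dart} (h : d.2 ≠ O d.1) : dwt (G := G) O d = 1 := by
  simp [dwt, h]

lemma push_dwt {O1 O2 : G.Orientation} {v : G.V} (hsink : G.IsSink O1 v)
    (hdiff : ∀ e, (O2 e ≠ O1 e ↔ G.Incident v e)) (d : G.Dart) :
    dwt (G := G) O2 d = dwt O1 d + 2 * chi (G := G) v (G.dartDst d)
      - 2 * chi (G := G) v (G.dartSrc d) := by
  classical
  rcases d with ⟨e, b⟩
  by_cases hInc : G.Incident v e
  · have hO2 : O2 e = !O1 e := by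
      have := (hdiff e).2 hInc
      cases h1 : O1 e <;> cases h2 : O2 e <;> simp_all
    obtain ⟨hd, hs⟩ := hsink e hInc
    by_cases hb : b = O1 e
    · have hdst : G.dartDst (e, b) = v := hb ▸ hd
      have hsrc : G.dartSrc (e, b) ≠ v := hb ▸ hs
      have hb2 : (e, b).2 ≠ O2 e := by rw [hO2, hb]; cases O1 e <;> simp
      rw [dwt_neg hb2, dwt_pos (show (e,b).2 = O1 e from hb), chi_pos hdst, chi_neg hsrc]
      ring
    · have hb' : b = !(O1 e) := by cases hOb : O1 e <;> cases hb2 : b <;> simp_all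
      have hdst : G.dartDst (e, b) ≠ v := by rw [hb', dartDst_not]; exact hs
      have hsrc : G.dartSrc (e, b) = v := by rw [hb', dartSrc_not]; exact hd
      have hb2 : (e, b).2 = O2 e := by rw [hO2, hb']
      rw [dwt_pos hb2, dwt_neg (show (e,b).2 ≠ O1 e from hb), chi_neg hdst, chi_pos hsrc]
      ring
  · have hO2 : O2 e = O1 e := by
      by_contra hne; exact hInc ((hdiff e).1 hne)
    have h1 := not_incident_src hInc b
    have h2 := not_incident_dst hInc b
    rw [chi_neg h1, chi_neg h2]
    simp [dwt, hO2]

lemma push_wt {O1 O2 : G.Orientation} {v : G.V} (hsink : G.IsSink O1 v)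
    (hdiff : ∀ e, (O2 e ≠ O1 e ↔ G.Incident v e)) {u w : G.V} {l : List G.Dart}
    (hw : G.IsWalk u w l) :
    wt (G := G) O2 l = wt O1 l + 2 * chi (G := G) v w - 2 * chi (G := G) v u := by
  induction l generalizing u with
  | nil => obtain rfl : u = w := hw; simp [wt]
  | cons d t ih =>
    obtain ⟨h1, h2⟩ := hw
    have := ih h2
    have hd := push_dwt (G := G) hsink hdiff d
    simp only [wt, List.map_cons, List.sum_cons] at this ⊢
    rw [hd, this, h1]; ring

lemma push_wt_cycle {O1 O2 : G.Orientation} (hp : G.PushUpSink O1 O2) {l : List G.Dart}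
    (hl : G.IsCycle l) : wt (G := G) O2 l = wt O1 l := by
  obtain ⟨v, hsink, hdiff⟩ := hp
  obtain ⟨u, hw⟩ := hl
  have := push_wt (G := G) hsink hdiff hw
  omega

lemma wt_unique (O : G.Orientation) (hyp : ∀ l : List G.Dart, G.IsCycle l → wt (G := G) O l = 0)
    {a v : G.V} {p q : List G.Dart} (hp : G.IsWalk a v p) (hq : G.IsWalk a v q) :
    wt (G := G) O p = wt O q := by
  have hcyc : G.IsCycle (p ++ q.reverse.map rv) :=
    ⟨a, isWalk_append hp (isWalk_reverse hq)⟩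
  have h0 := hyp _ hcyc
  have : wt (G := G) O (p ++ q.reverse.map rv) = wt O p + wt O (q.reverse.map rv) := by
    simp [wt]
  rw [this, wt_reverse] at h0
  omega

/-- The connectivity setoid. -/
def connSetoid : Setoid G.V where
  r u v := ∃ l, G.IsWalk u v l
  iseqv := by
    refine ⟨fun u => ⟨[], rfl⟩, fun ⟨l, hl⟩ => ⟨_, isWalk_reverse hl⟩, ?_⟩
    rintro u v w ⟨l, hl⟩ ⟨m, hm⟩
    exact ⟨l ++ m, isWalk_append hl hm⟩

/-- Base point of the component of `v`. -/
noncomputable def basePt (v : G.V) : G.V :=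
  (Quotient.mk (connSetoid (G := G)) v).out

lemma basePt_walk (v : G.V) : ∃ l, G.IsWalk (basePt (G := G) v) v l := by
  have h : connSetoid (G := G) |>.r ((Quotient.mk (connSetoid (G := G)) v).out) v :=
    Quotient.exact (Quotient.out_eq (Quotient.mk (connSetoid (G := G)) v))
  exact h

lemma basePt_eq {u v : G.V} (h : ∃ l, G.IsWalk u v l) :
    basePt (G := G) u = basePt (G := G) v := by
  unfold basePt
  congr 1
  exact Quotient.sound h

/-- Height function built from walk weights. -/
noncomputable def hgt (O : G.Orientation) (v : G.V) : ℤ :=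
  wt (G := G) O (Classical.choose (basePt_walk (G := G) v))

lemma hgt_isHeightMap (O : G.Orientation)
    (hyp : ∀ l : List G.Dart, G.IsCycle l → wt (G := G) O l = 0) :
    G.IsHeightMap O (hgt (G := G) O) := by
  intro e
  set s := G.oSrc O e with hs
  set t := G.oDst O e with ht
  have hde : G.IsWalk s t [(e, O e)] := ⟨rfl, rfl⟩
  have hbase : basePt (G := G) s = basePt (G := G) t := basePt_eq ⟨_, hde⟩
  have hps := Classical.choose_spec (basePt_walk (G := G) s)
  have hpt := Classical.choose_spec (basePt_walk (G := G) t)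
  have happ : G.IsWalk (basePt (G := G) t) t
      (Classical.choose (basePt_walk (G := G) s) ++ [(e, O e)]) := by
    rw [← hbase]; exact isWalk_append hps hde
  have h1 := wt_unique (G := G) O hyp hpt happ
  show hgt (G := G) O t = hgt (G := G) O s - 1
  unfold hgt
  rw [h1]
  have h2 : wt (G := G) O (Classical.choose (basePt_walk (G := G) s) ++ [(e, O e)])
      = wt O (Classical.choose (basePt_walk (G := G) s)) + dwt O (e, O e) := by
    simp [wt]
  rw [h2, dwt_pos rfl]
  ring

lemma oSrc_mem (O : G.Orientation) (e : G.E) :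
    G.oSrc O e = (G.ends e).1 ∨ G.oSrc O e = (G.ends e).2 := dartSrc_mem _

lemma oDst_mem (O : G.Orientation) (e : G.E) :
    G.oDst O e = (G.ends e).1 ∨ G.oDst O e = (G.ends e).2 := dartDst_mem _

lemma incident_src_or_dst {O : G.Orientation} {v : G.V} {e : G.E} (h : G.Incident v e) :
    G.oSrc O e = v ∨ G.oDst O e = v := by
  rcases h with h | h <;> cases hb : O e
  · right; show G.dartDst (e, O e) = v; rw [hb]; simpa [dartDst] using h
  · left; show G.dartSrc (e, O e) = v; rw [hb]; simpa [dartSrc] using h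
  · left; show G.dartSrc (e, O e) = v; rw [hb]; simpa [dartSrc] using h
  · right; show G.dartDst (e, O e) = v; rw [hb]; simpa [dartDst] using h

lemma incident_of_src {O : G.Orientation} {v : G.V} {e : G.E} (h : G.oSrc O e = v) :
    G.Incident v e := by
  rcases oSrc_mem (G := G) O e with h1 | h1 <;> [left; right] <;> rw [← h1, h]

lemma incident_of_dst {O : G.Orientation} {v : G.V} {e : G.E} (h : G.oDst O e = v) :
    G.Incident v e := by
  rcases oDst_mem (G := G) O e with h1 | h1 <;> [left; right] <;> rw [← h1, h]

lemma build (T : G.Orientation) (m : ℕ) :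
    ∀ (Oc : G.Orientation) (hc : G.V → ℤ) (r : G.V → ℕ),
    G.IsHeightMap Oc hc →
    G.IsHeightMap T (fun v => hc v + 2 * (r v : ℤ)) →
    (∑ v : G.V, r v) = m →
    ∃ (k : ℕ) (Os : ℕ → G.Orientation), Os 0 = Oc ∧ Os k = T ∧ ∀ i < k, G.PushUpSink (Os i) (Os (i + 1)) := by
  induction m with
  | zero =>
    intro Oc hc r hhm hT hsum
    have hr : ∀ v, r v = 0 := by
      intro v
      exact (Finset.sum_eq_zero_iff.mp hsum) v (Finset.mem_univ v)
    have hThc : G.IsHeightMap T hc := by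
      convert hT using 2 with v
      simp [hr]
    have hOT : Oc = T := by
      funext e
      by_contra hne
      have hTe : T e = !Oc e := by
        cases h1 : Oc e <;> cases h2 : T e <;> simp_all
      have h1 := hhm e
      have h2 := hThc e
      have e1 : G.oDst T e = G.oSrc Oc e := by
        show G.dartDst (e, T e) = G.dartSrc (e, Oc e)
        rw [hTe, dartDst_not]
      have e2 : G.oSrc T e = G.oDst Oc e := by
        show G.dartSrc (e, T e) = G.dartDst (e, Oc e)
        rw [hTe, dartSrc_not]
      rw [e1, e2] at h2
      omega
    exact ⟨0, fun _ => Oc, rfl, hOT, by omega⟩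
  | succ m ih =>
    intro Oc hc r hhm hT hsum
    -- choose a minimal-height vertex among those with r > 0
    have hSne : (Finset.univ.filter fun v => r v ≠ 0).Nonempty := by
      by_contra hemp
      rw [Finset.not_nonempty_iff_eq_empty, Finset.filter_eq_empty_iff] at hemp
      have : (∑ v : G.V, r v) = 0 := Finset.sum_eq_zero fun v hv => by
        have := hemp (Finset.mem_univ v); simpa using this
      omega
    obtain ⟨v, hvS, hvmin⟩ := Finset.exists_min_image _ hc hSne
    have hrv : r v ≠ 0 := by simpa using hvS
    -- v is a sink
    have hsink : G.IsSink Oc v := by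
      intro e he
      have hst : hc (G.oDst Oc e) = hc (G.oSrc Oc e) - 1 := hhm e
      have hTst : hc (G.oDst T e) + 2 * (r (G.oDst T e) : ℤ)
          = hc (G.oSrc T e) + 2 * (r (G.oSrc T e) : ℤ) - 1 := hT e
      -- first: the source is not v
      have hsrc_ne : G.oSrc Oc e ≠ v := by
        intro hsv
        set w := G.oDst Oc e with hw
        have hwv : w ≠ v := by intro h; rw [hsv, h] at hst; omega
        by_cases hrw : r w = 0
        · -- use the T height map; endpoints of e under T are {v, w}
          have hends : (G.oSrc T e = G.oSrc Oc e ∧ G.oDst T e = G.oDst Oc e)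
              ∨ (G.oSrc T e = G.oDst Oc e ∧ G.oDst T e = G.oSrc Oc e) := by
            by_cases h : T e = Oc e
            · left; constructor <;> simp [oSrc, oDst, h]
            · right
              have h2 : T e = !Oc e := by
                cases h1 : Oc e <;> cases h2 : T e <;> simp_all
              constructor
              · show G.dartSrc (e, T e) = G.dartDst (e, Oc e); rw [h2, dartSrc_not]
              · show G.dartDst (e, T e) = G.dartSrc (e, Oc e); rw [h2, dartDst_not]
          have h1 : (1 : ℤ) ≤ 2 * (r v : ℤ) := by
            have : 1 ≤ r v := Nat.one_le_iff_ne_zero.2 hrv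
            have : (1 : ℤ) ≤ (r v : ℤ) := by exact_mod_cast this
            omega
          rcases hends with ⟨ha, hb⟩ | ⟨ha, hb⟩ <;>
            rw [ha, hb] at hTst <;> rw [hsv] at hTst hst <;>
            simp only [← hw] at hTst hst <;> rw [hrw] at hTst <;> push_cast at hTst <;> omega
        · have hwS : w ∈ Finset.univ.filter fun u => r u ≠ 0 := by simpa using hrw
          have := hvmin w hwS
          rw [hsv] at hst
          omega
      -- hence the destination is v
      rcases incident_src_or_dst (O := Oc) he with h | h
      · exact absurd h hsrc_ne
      · exact ⟨h, hsrc_ne⟩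
    -- push v
    set O₁ : G.Orientation := fun e => if G.Incident v e then !Oc e else Oc e with hO₁
    have hpush : G.PushUpSink Oc O₁ := by
      refine ⟨v, hsink, fun e => ?_⟩
      by_cases h : G.Incident v e <;> simp [hO₁, h]
    set hc₁ : G.V → ℤ := fun u => if u = v then hc u + 2 else hc u with hhc₁
    set r₁ : G.V → ℕ := fun u => if u = v then r u - 1 else r u with hr₁
    have hhm₁ : G.IsHeightMap O₁ hc₁ := by
      intro e
      by_cases h : G.Incident v e
      · obtain ⟨hd, hs⟩ := hsink e h
        have hOe : O₁ e = !Oc e := by simp [hO₁, h]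
        have e1 : G.oDst O₁ e = G.oSrc Oc e := by
          show G.dartDst (e, O₁ e) = G.dartSrc (e, Oc e)
          rw [hOe, dartDst_not]
        have e2 : G.oSrc O₁ e = G.oDst Oc e := by
          show G.dartSrc (e, O₁ e) = G.dartDst (e, Oc e)
          rw [hOe, dartSrc_not]
        rw [e1, e2, hd]
        have h1 := hhm e
        rw [hd] at h1
        simp only [hhc₁, if_pos rfl, if_neg hs]
        omega
      · have hOe : O₁ e = Oc e := by simp [hO₁, h]
        have e1 : G.oDst O₁ e = G.oDst Oc e := by
          show G.dartDst (e, O₁ e) = G.dartDst (e, Oc e); rw [hOe]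
        have e2 : G.oSrc O₁ e = G.oSrc Oc e := by
          show G.dartSrc (e, O₁ e) = G.dartSrc (e, Oc e); rw [hOe]
        have hd : G.oDst Oc e ≠ v := fun hh => h (incident_of_dst hh)
        have hs : G.oSrc Oc e ≠ v := fun hh => h (incident_of_src hh)
        rw [e1, e2]
        simp only [hhc₁, if_neg hd, if_neg hs]
        exact hhm e
    have hg : (fun u => hc₁ u + 2 * (r₁ u : ℤ)) = fun u => hc u + 2 * (r u : ℤ) := by
      funext u
      by_cases h : u = v
      · subst h
        simp only [hhc₁, hr₁, if_pos rfl]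
        have : 1 ≤ r u := Nat.one_le_iff_ne_zero.2 hrv
        push_cast [Nat.cast_sub this]
        ring
      · simp [hhc₁, hr₁, h]
    have hT₁ : G.IsHeightMap T (fun u => hc₁ u + 2 * (r₁ u : ℤ)) := by rw [hg]; exact hT
    have hsum₁ : (∑ u : G.V, r₁ u) = m := by
      have h1 : ∑ u : G.V, r u = (∑ u ∈ Finset.univ.erase v, r u) + r v := by
        rw [Finset.sum_erase_add _ _ (Finset.mem_univ v)]
      have h2 : ∑ u : G.V, r₁ u = (∑ u ∈ Finset.univ.erase v, r₁ u) + r₁ v := by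
        rw [Finset.sum_erase_add _ _ (Finset.mem_univ v)]
      have h3 : ∑ u ∈ Finset.univ.erase v, r₁ u = ∑ u ∈ Finset.univ.erase v, r u :=
        Finset.sum_congr rfl fun u hu => by
          simp [hr₁, Finset.ne_of_mem_erase hu]
      have h4 : r₁ v = r v - 1 := by simp [hr₁]
      have : 1 ≤ r v := Nat.one_le_iff_ne_zero.2 hrv
      omega
    obtain ⟨k, Os, h0, hk, hstep⟩ := ih O₁ hc₁ r₁ hhm₁ hT₁ hsum₁
    refine ⟨k + 1, fun i => if i = 0 then Oc else Os (i - 1), by simp, by simp [hk], ?_⟩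
    intro i hi
    match i with
    | 0 => simpa [h0] using hpush
    | (j + 1) =>
      have hj : j < k := by omega
      simpa using hstep j hj

end FinMultigraph

/-- Pretzel. For an orientation `O` of a finite graph `Γ` the
following are equivalent: (1) every cycle traverses as many edges in the
direction of `O` as against it; (2) there is a finite sequence of orientations
`O = O_0, O_1, …, O_k = O^rev` in which each `O_i` arises from `O_{i-1}` by
pushing up a sink. -/
theorem reversal_by_pushing_up_sinks (G : FinMultigraph) (O : G.Orientation) :
    (∀ l : List G.Dart, G.IsCycle l → G.forwardCount O l = G.backwardCount O l) ↔
      (∃ (k : ℕ) (Os : ℕ → G.Orientation), Os 0 = O ∧ Os k = G.reverse O ∧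
        ∀ i < k, G.PushUpSink (Os i) (Os (i + 1))) := by
  open FinMultigraph in
  constructor
  · intro hyp
    have hyp' : ∀ l : List G.Dart, G.IsCycle l → wt (G := G) O l = 0 := fun l hl =>
      (count_eq_iff_wt O l).1 (hyp l hl)
    by_cases hne : Nonempty G.V
    · set h : G.V → ℤ := hgt (G := G) O with hh
      have hhm : G.IsHeightMap O h := hgt_isHeightMap O hyp'
      obtain ⟨v0⟩ := hne
      set C : ℤ := (Finset.univ.image h).max' ⟨h v0, Finset.mem_image_of_mem h (Finset.mem_univ v0)⟩ with hC
      have hCge : ∀ v, h v ≤ C := fun v =>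
        Finset.le_max' _ _ (Finset.mem_image_of_mem h (Finset.mem_univ v))
      set r : G.V → ℕ := fun v => (C - h v).toNat with hr
      have hcast : ∀ v, ((r v : ℤ)) = C - h v := fun v =>
        Int.toNat_of_nonneg (by have := hCge v; omega)
      have hkey : G.IsHeightMap (G.reverse O) (fun v => h v + 2 * (r v : ℤ)) := by
        intro e
        have e1 : G.oDst (G.reverse O) e = G.oSrc O e := by
          show G.dartDst (e, !(O e)) = G.dartSrc (e, O e); rw [dartDst_not]
        have e2 : G.oSrc (G.reverse O) e = G.oDst O e := by
          show G.dartSrc (e, !(O e)) = G.dartDst (e, O e); rw [dartSrc_not]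
        have h1 := hhm e
        simp only [e1, e2, hcast]
        omega
      obtain ⟨k, Os, h0, hk, hstep⟩ :=
        build (G := G) (G.reverse O) (∑ v : G.V, r v) O h r hhm hkey rfl
      exact ⟨k, Os, h0, hk, hstep⟩
    · have hOrev : O = G.reverse O := by
        funext e
        exact absurd ⟨(G.ends e).1⟩ hne
      exact ⟨0, fun _ => O, rfl, hOrev, by omega⟩
  · rintro ⟨k, Os, h0, hk, hstep⟩ l hcyc
    have key : ∀ i, i ≤ k → wt (G := G) (Os i) l = wt (G := G) (Os 0) l := by
      intro i
      induction i with
      | zero => intro _; rfl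
      | succ j ihj =>
        intro hj
        rw [push_wt_cycle (G := G) (hstep j (by omega)) hcyc, ihj (by omega)]
    have h1 := key k le_rfl
    rw [hk, h0, wt_rev_orientation] at h1
    exact (count_eq_iff_wt O l).2 (by omega)
end

section
/- Let \u0393 be a finite graph with an orientation O, let s be a sink of O, and let O' be the orientation obtained from O by pushing up the sink s. Then for every cycle \u03b3 in \u0393, the difference between the number of edges \u03b3 traverses in the direction of the orientation and the number of edges \u03b3 traverses against it is the same for O and for O'. -/
namespace FinMultigraph

attribute [local instance] Classical.propDecidable

lemma bal_cons (G : FinMultigraph) (O : G.Orientation) (d : G.Dart) (l : List G.Dart) :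
    (G.forwardCount O (d :: l) : ℤ) - G.backwardCount O (d :: l) =
      ((if d.2 == O d.1 then (1:ℤ) else -1)
        + ((G.forwardCount O l : ℤ) - G.backwardCount O l)) := by
  simp only [forwardCount, backwardCount, List.filter_cons]
  rcases h : d.2 == O d.1 with _ | _ <;> simp_all [bne] <;> ring

lemma dart_balance (G : FinMultigraph) (O O' : G.Orientation) (s : G.V)
    (hs : G.IsSink O s) (hdiff : ∀ e, (O' e ≠ O e ↔ G.Incident s e)) (d : G.Dart) :
    (if d.2 == O d.1 then (1:ℤ) else -1) - (if d.2 == O' d.1 then (1:ℤ) else -1) =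
      2 * ((if G.dartDst d = s then (1:ℤ) else 0) - (if G.dartSrc d = s then (1:ℤ) else 0)) := by
  obtain ⟨e, b⟩ := d
  by_cases hinc : G.Incident s e
  · have hne : O' e ≠ O e := (hdiff e).2 hinc
    obtain ⟨hdst, hsrc⟩ := hs e hinc
    have hO' : O' e = !(O e) := by
      rcases h : O e <;> rcases h' : O' e <;> simp_all
    rcases hb : b <;> rcases hOe : O e <;>
      simp_all [oSrc, oDst, dartSrc, dartDst]
  · have heq : O' e = O e := by
      by_contra h; exact hinc ((hdiff e).1 h)
    have h1 : (G.ends e).1 ≠ s := fun h => hinc (Or.inl h)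
    have h2 : (G.ends e).2 ≠ s := fun h => hinc (Or.inr h)
    rcases hb : b <;> simp_all [dartSrc, dartDst]

lemma walk_balance (G : FinMultigraph) (O O' : G.Orientation) (s : G.V)
    (hs : G.IsSink O s) (hdiff : ∀ e, (O' e ≠ O e ↔ G.Incident s e)) :
    ∀ (l : List G.Dart) (u v : G.V), G.IsWalk u v l →
      ((G.forwardCount O l : ℤ) - G.backwardCount O l)
        - ((G.forwardCount O' l : ℤ) - G.backwardCount O' l) =
      2 * ((if v = s then (1:ℤ) else 0) - (if u = s then (1:ℤ) else 0)) := by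
  intro l
  induction l with
  | nil => intro u v h; cases h; simp [forwardCount, backwardCount]
  | cons d t ih =>
    intro u v h
    obtain ⟨hsrc, hw⟩ := h
    have hd := G.dart_balance O O' s hs hdiff d
    have ht := ih (G.dartDst d) v hw
    rw [G.bal_cons O d t, G.bal_cons O' d t]
    rw [← hsrc]
    linarith

end FinMultigraph

/-- Pushing up a sink does not change, for any cycle, the
difference between the number of edges traversed in the direction of the
orientation and the number traversed against it. -/
theorem pushUpSink_preserves_cycle_balance (G : FinMultigraph)
    (O O' : G.Orientation) (s : G.V) (hs : G.IsSink O s)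
    (hdiff : ∀ e, (O' e ≠ O e ↔ G.Incident s e)) :
    ∀ l : List G.Dart, G.IsCycle l →
      (G.forwardCount O l : ℤ) - G.backwardCount O l =
        (G.forwardCount O' l : ℤ) - G.backwardCount O' l := by
  intro l hl
  obtain ⟨v, hw⟩ := hl
  have := G.walk_balance O O' s hs hdiff l v v hw
  simp at this
  linarith
end
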